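/- Let T be a smooth, symmetric, stationary energy-momentum tensor on Minkowski space integrable over Σ, which is traceless (η_{αβ}T^{αβ} = 0, equivalently T^{00} = T^{11}+T^{22}+T^{33} pointwise), has isotropic spatial integrals ∫_Σ T^{11} d³x = ∫_Σ T^{22} d³x = ∫_Σ T^{33} d³x, and has vanishing total spatial momentum P^a[Σ,T] = 0 for a = 1,2,3. Then ∫_Σ T^{11} d³x = (1/3)P⁰[Σ,T], and for the pure boost Λ in the x¹-direction with velocity parameter β: P¹[Σ, Λ·T] = (4/3)βγ P⁰[Σ,T] and P⁰[Σ, Λ·T] = γ(1 + β²/3)P⁰[Σ,T]. -/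

import Mathlib

open MeasureTheory

noncomputable section

/-- Embedding of the spacelike hyperplane `Σ = {x⁰ = 0}` into Minkowski space `ℝ⁴`. -/
def emb (y : Fin 3 → ℝ) : Fin 4 → ℝ := Fin.cons 0 y

/-- Total four-momentum `P^α[Σ,T] := ∫_Σ T^{α0} d³x`. -/
def Pmom (T : (Fin 4 → ℝ) → Fin 4 → Fin 4 → ℝ) (α : Fin 4) : ℝ :=
  ∫ y : Fin 3 → ℝ, T (emb y) α 0

/-- Active Lorentz transformation of a (2,0)-tensor field:
`(Λ·T)^{αβ}(x) = Λ^α_γ Λ^β_δ T^{γδ}(Λ⁻¹x)`. -/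
def actT (Λ : Matrix (Fin 4) (Fin 4) ℝ) (T : (Fin 4 → ℝ) → Fin 4 → Fin 4 → ℝ) :
    (Fin 4 → ℝ) → Fin 4 → Fin 4 → ℝ :=
  fun x α β => ∑ γ : Fin 4, ∑ δ : Fin 4, Λ α γ * Λ β δ * T (Λ⁻¹.mulVec x) γ δ

/-- Lorentz factor `γ = 1/√(1−β²)`. -/
def gam (b : ℝ) : ℝ := 1 / Real.sqrt (1 - b ^ 2)

/-- The pure boost in the `x¹`-direction with velocity parameter `b`. -/
def boost1 (b : ℝ) : Matrix (Fin 4) (Fin 4) ℝ :=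
  Matrix.of fun i j =>
    if i = 0 ∧ j = 0 then gam b
    else if i = 0 ∧ j = 1 then b * gam b
    else if i = 1 ∧ j = 0 then b * gam b
    else if i = 1 ∧ j = 1 then gam b
    else if i = j then 1 else 0

/-- Auxiliary: a stationary tensor is constant along the time direction. -/
theorem stat_shift (T : (Fin 4 → ℝ) → Fin 4 → Fin 4 → ℝ)
    (hsmooth : ContDiff ℝ (⊤ : ℕ∞) T)
    (hstat : ∀ x α β, fderiv ℝ (fun z => T z α β) x (Pi.single 0 1) = 0)
    (x : Fin 4 → ℝ) (t : ℝ) (α β : Fin 4) :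
    T (x + t • (Pi.single 0 1 : Fin 4 → ℝ)) α β = T x α β := by
  have hd : Differentiable ℝ (fun z => T z α β) := by
    have := (contDiff_pi.mp ((contDiff_pi.mp hsmooth) α)) β
    exact this.differentiable (by simp)
  have key : ∀ s : ℝ, HasDerivAt (fun t : ℝ => T (x + t • (Pi.single 0 1 : Fin 4 → ℝ)) α β) 0 s := by
    intro s
    have h1 : HasDerivAt (fun t : ℝ => x + t • (Pi.single 0 1 : Fin 4 → ℝ)) (Pi.single 0 1) s := by
      simpa using ((hasDerivAt_id s).smul_const (Pi.single 0 1 : Fin 4 → ℝ)).const_add x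
    have h2 := (hd (x + s • (Pi.single 0 1 : Fin 4 → ℝ))).hasFDerivAt.comp_hasDerivAt s h1
    rw [hstat] at h2
    exact h2
  have : (fun t : ℝ => T (x + t • (Pi.single 0 1 : Fin 4 → ℝ)) α β) t
      = (fun t : ℝ => T (x + t • (Pi.single 0 1 : Fin 4 → ℝ)) α β) 0 :=
    is_const_of_deriv_eq_zero (fun s => (key s).differentiableAt) (fun s => (key s).deriv) t 0
  simpa using this

/-- Auxiliary: change of variables for scaling the first coordinate of `ℝ³`. -/
theorem cov (f : (Fin 3 → ℝ) → ℝ) (hf : Continuous f) (hI : Integrable f) (g : ℝ) (hg : 0 < g) :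
    Integrable (fun y : Fin 3 → ℝ => f (fun i => (if i = 0 then g else 1) * y i)) ∧
    (∫ y : Fin 3 → ℝ, f (fun i => (if i = 0 then g else 1) * y i)) = g⁻¹ * ∫ y, f y := by
  classical
  set D : Matrix (Fin 3) (Fin 3) ℝ := Matrix.diagonal (fun i => if i = 0 then g else 1) with hD
  set lin : (Fin 3 → ℝ) →ₗ[ℝ] (Fin 3 → ℝ) := Matrix.toLin' D with hlin
  have hdet : LinearMap.det lin = g := by
    rw [hlin, LinearMap.det_toLin', hD, Matrix.det_diagonal]
    simp [Fin.prod_univ_three]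
  have hdet0 : LinearMap.det lin ≠ 0 := by rw [hdet]; exact ne_of_gt hg
  have hmap : Measure.map lin volume = ENNReal.ofReal g⁻¹ • volume := by
    rw [Real.map_linearMap_volume_pi_eq_smul_volume_pi hdet0, hdet,
      abs_of_pos (inv_pos.mpr hg)]
  have hlc : Continuous lin := lin.continuous_of_finiteDimensional
  have happ : ∀ y : Fin 3 → ℝ, lin y = fun i => (if i = 0 then g else 1) * y i := by
    intro y
    funext i
    rw [hlin, Matrix.toLin'_apply, hD, Matrix.mulVec_diagonal]
  have hIs : Integrable f (ENNReal.ofReal g⁻¹ • volume) :=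
    hI.smul_measure ENNReal.ofReal_ne_top
  have hs : AEStronglyMeasurable f (Measure.map lin volume) := by
    rw [hmap]; exact hf.aestronglyMeasurable
  have hic : Integrable (f ∘ lin) volume :=
    (integrable_map_measure hs hlc.aemeasurable).mp (hmap ▸ hIs)
  have hieq : (∫ y, f (lin y)) = g⁻¹ * ∫ y, f y := by
    have := integral_map hlc.aemeasurable hs
    rw [hmap, integral_smul_measure] at this
    rw [← this, ENNReal.toReal_ofReal (le_of_lt (inv_pos.mpr hg)), smul_eq_mul]
  constructor
  · have : (fun y : Fin 3 → ℝ => f (fun i => (if i = 0 then g else 1) * y i)) = f ∘ lin := by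
      funext y; rw [Function.comp_apply, happ]
    rw [this]; exact hic
  · rw [← hieq]
    exact integral_congr_ae (Filter.Eventually.of_forall fun y => by simp only []; rw [happ y])

/-- **the 4/3-problem.** For a smooth, symmetric, stationary, traceless
energy-momentum tensor with isotropic spatial integrals and vanishing total spatial momentum:
`∫T¹¹ = P⁰/3`, and under the pure boost in the `x¹`-direction,
`P̄¹ = (4/3)βγP⁰` and `P̄⁰ = γ(1+β²/3)P⁰`. -/
theorem four_thirds_problem
    (T : (Fin 4 → ℝ) → Fin 4 → Fin 4 → ℝ)
    (hsmooth : ContDiff ℝ (⊤ : ℕ∞) T)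
    (hsym : ∀ x α β, T x α β = T x β α)
    (hstat : ∀ x α β, fderiv ℝ (fun z => T z α β) x (Pi.single 0 1) = 0)
    (hInt : ∀ α β, Integrable fun y : Fin 3 → ℝ => T (emb y) α β)
    (htrace : ∀ x, T x 0 0 = T x 1 1 + T x 2 2 + T x 3 3)
    (hiso12 : (∫ y : Fin 3 → ℝ, T (emb y) 1 1) = ∫ y : Fin 3 → ℝ, T (emb y) 2 2)
    (hiso13 : (∫ y : Fin 3 → ℝ, T (emb y) 1 1) = ∫ y : Fin 3 → ℝ, T (emb y) 3 3)
    (hPzero : ∀ a : Fin 3, Pmom T a.succ = 0)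
    (b : ℝ) (hb : b ∈ Set.Ioo (-1 : ℝ) 1) :
    (∫ y : Fin 3 → ℝ, T (emb y) 1 1) = (1 / 3) * Pmom T 0 ∧
    Pmom (actT (boost1 b) T) 1 = (4 / 3) * b * gam b * Pmom T 0 ∧
    Pmom (actT (boost1 b) T) 0 = gam b * (1 + b ^ 2 / 3) * Pmom T 0 := by
  obtain ⟨hb1, hb2⟩ := hb
  have h1b : 0 < 1 - b ^ 2 := by nlinarith
  have hg0 : 0 < gam b := by rw [gam]; positivity
  have hgne : gam b ≠ 0 := ne_of_gt hg0
  have hgs : gam b * gam b = 1 / (1 - b ^ 2) := by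
    rw [gam, div_mul_div_comm, one_mul, Real.mul_self_sqrt h1b.le]
  have key : gam b * gam b * (1 - b ^ 2) = 1 := by
    rw [hgs]; field_simp
  have hgneg : gam (-b) = gam b := by rw [gam, gam, neg_pow]; ring_nf
  -- Part 1
  have ht3 : Pmom T 0 = 3 * ∫ y : Fin 3 → ℝ, T (emb y) 1 1 := by
    have h : Pmom T 0 = ∫ y : Fin 3 → ℝ,
        (T (emb y) 1 1 + T (emb y) 2 2 + T (emb y) 3 3) :=
      integral_congr_ae (Filter.Eventually.of_forall fun y => htrace (emb y))
    have i12 : Integrable (fun y : Fin 3 → ℝ => T (emb y) 1 1 + T (emb y) 2 2) :=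
      (hInt 1 1).add (hInt 2 2)
    rw [h, integral_add i12 (hInt 3 3), integral_add (hInt 1 1) (hInt 2 2),
      ← hiso12, ← hiso13]
    ring
  have part1 : (∫ y : Fin 3 → ℝ, T (emb y) 1 1) = (1 / 3) * Pmom T 0 := by linarith
  -- boost inverse
  have hBinv : (boost1 b)⁻¹ = boost1 (-b) := by
    apply Matrix.inv_eq_right_inv
    ext i j
    fin_cases i <;> fin_cases j <;>
      simp [boost1, Matrix.mul_apply, Fin.sum_univ_four, hgneg, Matrix.one_apply] <;>
      linarith [key]
  have hc0 : ∀ (p : Fin 3 → ℝ), emb p 0 = 0 := fun p => rfl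
  have hc1 : ∀ (p : Fin 3 → ℝ), emb p 1 = p 0 := fun p => rfl
  have hc2 : ∀ (p : Fin 3 → ℝ), emb p 2 = p 1 := fun p => rfl
  have hc3 : ∀ (p : Fin 3 → ℝ), emb p 3 = p 2 := fun p => rfl
  have hv : ∀ y : Fin 3 → ℝ, (boost1 b)⁻¹.mulVec (emb y) =
      emb (fun i => (if i = 0 then gam b else 1) * y i)
        + (-(b * gam b * y 0)) • (Pi.single 0 1 : Fin 4 → ℝ) := by
    intro y
    rw [hBinv]
    funext i
    fin_cases i <;>
      simp [boost1, Matrix.mulVec, dotProduct, Fin.sum_univ_four,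
        hc0, hc1, hc2, hc3, hgneg, Pi.single, Function.update]
  have hTpt : ∀ (y : Fin 3 → ℝ) (γ δ : Fin 4),
      T ((boost1 b)⁻¹.mulVec (emb y)) γ δ
        = T (emb (fun i => (if i = 0 then gam b else 1) * y i)) γ δ := by
    intro y γ δ
    rw [hv y]
    exact stat_shift T hsmooth hstat _ _ γ δ
  -- continuity of components pulled back to Σ
  have hembc : Continuous (emb : (Fin 3 → ℝ) → (Fin 4 → ℝ)) := by
    refine continuous_pi fun i => ?_
    refine Fin.cases ?_ (fun j => ?_) i
    · simpa [emb] using (continuous_const : Continuous fun _ : Fin 3 → ℝ => (0 : ℝ))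
    · simpa [emb] using continuous_apply j
  have hcont : ∀ γ δ : Fin 4, Continuous fun z : Fin 3 → ℝ => T (emb z) γ δ :=
    fun γ δ => (continuous_apply δ).comp
      ((continuous_apply γ).comp (hsmooth.continuous.comp hembc))
  -- change of variables facts
  have hcov : ∀ γ δ : Fin 4,
      Integrable (fun y : Fin 3 → ℝ =>
        T (emb (fun i => (if i = 0 then gam b else 1) * y i)) γ δ) ∧
      (∫ y : Fin 3 → ℝ, T (emb (fun i => (if i = 0 then gam b else 1) * y i)) γ δ)
        = (gam b)⁻¹ * ∫ y : Fin 3 → ℝ, T (emb y) γ δ :=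
    fun γ δ => cov (fun z => T (emb z) γ δ) (hcont γ δ) (hInt γ δ) (gam b) hg0
  -- special integrals
  have hI10 : (∫ y : Fin 3 → ℝ, T (emb y) 1 0) = 0 := hPzero 0
  have hI01 : (∫ y : Fin 3 → ℝ, T (emb y) 0 1) = 0 := by
    rw [show (∫ y : Fin 3 → ℝ, T (emb y) 0 1) = ∫ y : Fin 3 → ℝ, T (emb y) 1 0 from
      integral_congr_ae (Filter.Eventually.of_forall fun y => hsym (emb y) 0 1)]
    exact hI10
  -- expanding the boosted momenta
  have hE : ∀ (α : Fin 4) (y : Fin 3 → ℝ), actT (boost1 b) T (emb y) α 0 =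
      boost1 b α 0 * (gam b) * T (emb (fun i => (if i = 0 then gam b else 1) * y i)) 0 0
      + boost1 b α 0 * (b * gam b) * T (emb (fun i => (if i = 0 then gam b else 1) * y i)) 0 1
      + boost1 b α 1 * (gam b) * T (emb (fun i => (if i = 0 then gam b else 1) * y i)) 1 0
      + boost1 b α 1 * (b * gam b) * T (emb (fun i => (if i = 0 then gam b else 1) * y i)) 1 1
      + boost1 b α 2 * (gam b) * T (emb (fun i => (if i = 0 then gam b else 1) * y i)) 2 0
      + boost1 b α 2 * (b * gam b) * T (emb (fun i => (if i = 0 then gam b else 1) * y i)) 2 1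
      + boost1 b α 3 * (gam b) * T (emb (fun i => (if i = 0 then gam b else 1) * y i)) 3 0
      + boost1 b α 3 * (b * gam b) * T (emb (fun i => (if i = 0 then gam b else 1) * y i)) 3 1 := by
    intro α y
    simp only [actT, hTpt]
    rw [Fin.sum_univ_four]
    simp only [Fin.sum_univ_four]
    have e00 : boost1 b 0 0 = gam b := rfl
    have e01 : boost1 b 0 1 = b * gam b := rfl
    have e02 : boost1 b 0 2 = 0 := rfl
    have e03 : boost1 b 0 3 = 0 := rfl
    rw [e00, e01, e02, e03]
    ring
  -- generic splitting of the integral of a four-term combination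
  have hsplit : ∀ c1 c2 c3 c4 : ℝ,
      (∫ y : Fin 3 → ℝ,
        (c1 * T (emb (fun i => (if i = 0 then gam b else 1) * y i)) 0 0
        + c2 * T (emb (fun i => (if i = 0 then gam b else 1) * y i)) 0 1
        + c3 * T (emb (fun i => (if i = 0 then gam b else 1) * y i)) 1 0
        + c4 * T (emb (fun i => (if i = 0 then gam b else 1) * y i)) 1 1))
      = c1 * ((gam b)⁻¹ * ∫ y : Fin 3 → ℝ, T (emb y) 0 0)
        + c4 * ((gam b)⁻¹ * ∫ y : Fin 3 → ℝ, T (emb y) 1 1) := by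
    intro c1 c2 c3 c4
    have i1 : Integrable (fun y : Fin 3 → ℝ =>
        c1 * T (emb (fun i => (if i = 0 then gam b else 1) * y i)) 0 0
        + c2 * T (emb (fun i => (if i = 0 then gam b else 1) * y i)) 0 1) :=
      ((hcov 0 0).1.const_mul c1).add ((hcov 0 1).1.const_mul c2)
    have i2 : Integrable (fun y : Fin 3 → ℝ =>
        c1 * T (emb (fun i => (if i = 0 then gam b else 1) * y i)) 0 0
        + c2 * T (emb (fun i => (if i = 0 then gam b else 1) * y i)) 0 1
        + c3 * T (emb (fun i => (if i = 0 then gam b else 1) * y i)) 1 0) :=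
      i1.add ((hcov 1 0).1.const_mul c3)
    rw [integral_add i2 ((hcov 1 1).1.const_mul c4), integral_add i1 ((hcov 1 0).1.const_mul c3),
      integral_add ((hcov 0 0).1.const_mul c1) ((hcov 0 1).1.const_mul c2),
      integral_const_mul, integral_const_mul, integral_const_mul, integral_const_mul,
      (hcov 0 0).2, (hcov 0 1).2, (hcov 1 0).2, (hcov 1 1).2, hI01, hI10]
    ring
  have e10 : boost1 b 1 0 = b * gam b := rfl
  have e11 : boost1 b 1 1 = gam b := rfl
  have e12 : boost1 b 1 2 = 0 := rfl
  have e13 : boost1 b 1 3 = 0 := rfl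
  have e00 : boost1 b 0 0 = gam b := rfl
  have e01 : boost1 b 0 1 = b * gam b := rfl
  have e02 : boost1 b 0 2 = 0 := rfl
  have e03 : boost1 b 0 3 = 0 := rfl
  have hP0def : Pmom T 0 = ∫ y : Fin 3 → ℝ, T (emb y) 0 0 := rfl
  refine ⟨part1, ?_, ?_⟩
  · have h1 : Pmom (actT (boost1 b) T) 1 = ∫ y : Fin 3 → ℝ,
        ((b * gam b * gam b) * T (emb (fun i => (if i = 0 then gam b else 1) * y i)) 0 0
        + (b * gam b * (b * gam b)) * T (emb (fun i => (if i = 0 then gam b else 1) * y i)) 0 1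
        + (gam b * gam b) * T (emb (fun i => (if i = 0 then gam b else 1) * y i)) 1 0
        + (gam b * (b * gam b)) * T (emb (fun i => (if i = 0 then gam b else 1) * y i)) 1 1) := by
      refine integral_congr_ae (Filter.Eventually.of_forall fun y => ?_)
      simp only []
      rw [hE 1 y, e10, e11, e12, e13]
      ring
    rw [h1, hsplit, ← hP0def, part1]
    field_simp
    ring
  · have h0 : Pmom (actT (boost1 b) T) 0 = ∫ y : Fin 3 → ℝ,
        ((gam b * gam b) * T (emb (fun i => (if i = 0 then gam b else 1) * y i)) 0 0
        + (gam b * (b * gam b)) * T (emb (fun i => (if i = 0 then gam b else 1) * y i)) 0 1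
        + (b * gam b * gam b) * T (emb (fun i => (if i = 0 then gam b else 1) * y i)) 1 0
        + (b * gam b * (b * gam b)) * T (emb (fun i => (if i = 0 then gam b else 1) * y i)) 1 1) := by
      refine integral_congr_ae (Filter.Eventually.of_forall fun y => ?_)
      simp only []
      rw [hE 0 y, e00, e01, e02, e03]
      ring
    rw [h0, hsplit, ← hP0def, part1]
    field_simp


end
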